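/- The function φ(a,b) = C(a,b) − S(a,b) is convex on (0,∞)², where C is the contra-harmonic mean and S the root-mean-square. -/

import Mathlib

set_option maxHeartbeats 1000000


noncomputable def meanA (a b : ℝ) : ℝ := (a + b) / 2
noncomputable def meanG (a b : ℝ) : ℝ := Real.sqrt (a * b)
noncomputable def meanH (a b : ℝ) : ℝ := 2 * a * b / (a + b)
noncomputable def meanN (a b : ℝ) : ℝ := (a + Real.sqrt (a * b) + b) / 3
noncomputable def meanC (a b : ℝ) : ℝ := (a ^ 2 + b ^ 2) / (a + b)
noncomputable def meanS (a b : ℝ) : ℝ := Real.sqrt ((a ^ 2 + b ^ 2) / 2)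
noncomputable def meanR (a b : ℝ) : ℝ := 2 * (a ^ 2 + a * b + b ^ 2) / (3 * (a + b))
noncomputable def triDelta (a b : ℝ) : ℝ := (a - b) ^ 2 / (a + b)
noncomputable def hellinger (a b : ℝ) : ℝ := (Real.sqrt a - Real.sqrt b) ^ 2 / 2

theorem stmt_4 :
    ConvexOn ℝ (Set.Ioi (0 : ℝ) ×ˢ Set.Ioi (0 : ℝ))
      (fun p : ℝ × ℝ => meanC p.1 p.2 - meanS p.1 p.2) := by
  refine ⟨(convex_Ioi 0).prod (convex_Ioi 0), ?_⟩
  rintro ⟨a₁, b₁⟩ ⟨ha₁, hb₁⟩ ⟨a₂, b₂⟩ ⟨ha₂, hb₂⟩ k m hk hm hkm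
  simp only [Set.mem_Ioi] at ha₁ hb₁ ha₂ hb₂
  simp only [Prod.smul_mk, Prod.mk_add_mk, smul_eq_mul, meanC, meanS]
  set a₃ : ℝ := k * a₁ + m * a₂ with ha₃def
  set b₃ : ℝ := k * b₁ + m * b₂ with hb₃def
  set u₁ : ℝ := Real.sqrt ((a₁ ^ 2 + b₁ ^ 2) / 2) with hu₁def
  set u₂ : ℝ := Real.sqrt ((a₂ ^ 2 + b₂ ^ 2) / 2) with hu₂def
  set u₃ : ℝ := Real.sqrt ((a₃ ^ 2 + b₃ ^ 2) / 2) with hu₃def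
  have hs₁ : (0:ℝ) < a₁ + b₁ := by linarith
  have hs₂ : (0:ℝ) < a₂ + b₂ := by linarith
  have ha₃ : 0 < a₃ := by
    rcases eq_or_lt_of_le hk with h | h
    · have hm1 : m = 1 := by linarith
      simp [ha₃def, ← h, hm1, ha₂]
    · nlinarith [mul_nonneg hm ha₂.le]
  have hb₃ : 0 < b₃ := by
    rcases eq_or_lt_of_le hk with h | h
    · have hm1 : m = 1 := by linarith
      simp [hb₃def, ← h, hm1, hb₂]
    · nlinarith [mul_nonneg hm hb₂.le]
  have hs₃ : (0:ℝ) < a₃ + b₃ := by linarith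
  -- squares of the u's
  have hu₁sq : u₁ ^ 2 = (a₁ ^ 2 + b₁ ^ 2) / 2 := Real.sq_sqrt (by positivity)
  have hu₂sq : u₂ ^ 2 = (a₂ ^ 2 + b₂ ^ 2) / 2 := Real.sq_sqrt (by positivity)
  have hu₃sq : u₃ ^ 2 = (a₃ ^ 2 + b₃ ^ 2) / 2 := Real.sq_sqrt (by positivity)
  have hu₁pos : 0 < u₁ := Real.sqrt_pos.2 (by positivity)
  have hu₂pos : 0 < u₂ := Real.sqrt_pos.2 (by positivity)
  have hu₃pos : 0 < u₃ := Real.sqrt_pos.2 (by positivity)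
  clear_value a₃ b₃ u₁ u₂ u₃
  -- u₃ ≥ s₃ / 2
  have hu₃big : (a₃ + b₃) / 2 ≤ u₃ := by
    rw [hu₃def, Real.le_sqrt (by positivity)]
    · have h := sq_nonneg (a₃ - b₃)
      have hr : (a₃ ^ 2 + b₃ ^ 2) / 2 - ((a₃ + b₃) / 2) ^ 2 = (a₃ - b₃) ^ 2 / 4 := by ring
      linarith
    · positivity
  -- Cauchy-Schwarz : (a₁a₂ + b₁b₂)/2 ≤ u₁ u₂
  have hcauchy : (a₁ * a₂ + b₁ * b₂) / 2 ≤ u₁ * u₂ := by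
    rw [hu₁def, hu₂def, ← Real.sqrt_mul (by positivity)]
    rw [show ((a₁ ^ 2 + b₁ ^ 2) / 2) * ((a₂ ^ 2 + b₂ ^ 2) / 2)
        = ((a₁ ^ 2 + b₁ ^ 2) * (a₂ ^ 2 + b₂ ^ 2)) / 4 by ring]
    rw [Real.le_sqrt (by positivity)]
    · nlinarith [sq_nonneg (a₁ * b₂ - a₂ * b₁)]
    · positivity
  -- subadditivity (Minkowski) : u₃ ≤ k u₁ + m u₂
  have hmink : u₃ ≤ k * u₁ + m * u₂ := by
    have hprod : 0 ≤ k * m * (u₁ * u₂ - (a₁ * a₂ + b₁ * b₂) / 2) :=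
      mul_nonneg (mul_nonneg hk hm) (sub_nonneg.2 hcauchy)
    have hle : (a₃ ^ 2 + b₃ ^ 2) / 2 ≤ (k * u₁ + m * u₂) ^ 2 := by
      have expand : (a₃ ^ 2 + b₃ ^ 2) / 2
          = k ^ 2 * u₁ ^ 2 + k * m * (a₁ * a₂ + b₁ * b₂) + m ^ 2 * u₂ ^ 2 := by
        rw [ha₃def, hb₃def, hu₁sq, hu₂sq]; ring
      rw [expand]
      have : (k * u₁ + m * u₂) ^ 2
          - (k ^ 2 * u₁ ^ 2 + k * m * (a₁ * a₂ + b₁ * b₂) + m ^ 2 * u₂ ^ 2)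
          = 2 * (k * m * (u₁ * u₂ - (a₁ * a₂ + b₁ * b₂) / 2)) := by ring
      linarith [hprod, this]
    calc u₃ ≤ Real.sqrt ((k * u₁ + m * u₂) ^ 2) := by
          rw [hu₃def]; exact Real.sqrt_le_sqrt hle
    _ = k * u₁ + m * u₂ := Real.sqrt_sq (by positivity)
  set c : ℝ := k * u₁ + m * u₂ with hcdef
  have hcpos : 0 < c := lt_of_lt_of_le hu₃pos hmink
  -- rewrite meanC's using u's
  have e₁ : (a₁ ^ 2 + b₁ ^ 2) / (a₁ + b₁) = 2 * u₁ ^ 2 / (a₁ + b₁) := by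
    rw [hu₁sq]; ring
  have e₂ : (a₂ ^ 2 + b₂ ^ 2) / (a₂ + b₂) = 2 * u₂ ^ 2 / (a₂ + b₂) := by
    rw [hu₂sq]; ring
  have e₃ : (a₃ ^ 2 + b₃ ^ 2) / (a₃ + b₃) = 2 * u₃ ^ 2 / (a₃ + b₃) := by
    rw [hu₃sq]; ring
  rw [e₁, e₂, e₃]
  -- step 1 : monotonicity in u
  have h1 : 2 * u₃ ^ 2 / (a₃ + b₃) - u₃ ≤ 2 * c ^ 2 / (a₃ + b₃) - c := by
    have hkey : 0 ≤ (c - u₃) * (2 * (c + u₃) - (a₃ + b₃)) :=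
      mul_nonneg (sub_nonneg.2 hmink) (by linarith)
    have eu : 2 * u₃ ^ 2 / (a₃ + b₃) - u₃ = (2 * u₃ ^ 2 - u₃ * (a₃ + b₃)) / (a₃ + b₃) := by
      field_simp
    have ec : 2 * c ^ 2 / (a₃ + b₃) - c = (2 * c ^ 2 - c * (a₃ + b₃)) / (a₃ + b₃) := by
      field_simp
    rw [eu, ec, div_le_div_iff₀ hs₃ hs₃]
    have hr : (2 * c ^ 2 - c * (a₃ + b₃)) * (a₃ + b₃)
        - (2 * u₃ ^ 2 - u₃ * (a₃ + b₃)) * (a₃ + b₃)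
        = ((c - u₃) * (2 * (c + u₃) - (a₃ + b₃))) * (a₃ + b₃) := by ring
    have := mul_nonneg hkey hs₃.le
    linarith
  -- step 2 : joint convexity of (s, u) ↦ 2u²/s - u
  have h2 : 2 * c ^ 2 / (a₃ + b₃) - c
      ≤ k * (2 * u₁ ^ 2 / (a₁ + b₁) - u₁) + m * (2 * u₂ ^ 2 / (a₂ + b₂) - u₂) := by
    have key : 2 * c ^ 2 / (a₃ + b₃)
        ≤ k * (2 * u₁ ^ 2 / (a₁ + b₁)) + m * (2 * u₂ ^ 2 / (a₂ + b₂)) := by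
      have hs₃eq : a₃ + b₃ = k * (a₁ + b₁) + m * (a₂ + b₂) := by
        rw [ha₃def, hb₃def]; ring
      have ecomb : k * (2 * u₁ ^ 2 / (a₁ + b₁)) + m * (2 * u₂ ^ 2 / (a₂ + b₂))
          = (2 * k * u₁ ^ 2 * (a₂ + b₂) + 2 * m * u₂ ^ 2 * (a₁ + b₁))
            / ((a₁ + b₁) * (a₂ + b₂)) := by
        field_simp
      rw [ecomb, hs₃eq, div_le_div_iff₀ (hs₃eq ▸ hs₃) (mul_pos hs₁ hs₂), hcdef]
      have hnn : 0 ≤ 2 * (k * m) * (u₁ * (a₂ + b₂) - u₂ * (a₁ + b₁)) ^ 2 := by positivity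
      have hr : (2 * k * u₁ ^ 2 * (a₂ + b₂) + 2 * m * u₂ ^ 2 * (a₁ + b₁))
            * (k * (a₁ + b₁) + m * (a₂ + b₂))
          - 2 * (k * u₁ + m * u₂) ^ 2 * ((a₁ + b₁) * (a₂ + b₂))
          = 2 * (k * m) * (u₁ * (a₂ + b₂) - u₂ * (a₁ + b₁)) ^ 2 := by ring
      linarith
    have : c = k * u₁ + m * u₂ := hcdef
    linarith [key]
  linarith [h1, h2]
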